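/- Let G' be a finite simple graph of order r ≥ 2 and let G = G' ∘ 2K₁ be the corona of G' with the empty graph on two vertices (so G is obtained from G' by attaching two new pendant vertices to each vertex of G'). Then ft(G) = Z*(G) = Z(G) = r. -/

import Mathlib

open Finset

/-- A fort of a graph: a nonempty (finite) set of vertices `F` such that no vertex
outside `F` has exactly one neighbor in `F`. -/
def IsFort {V : Type*} (G : SimpleGraph V) (F : Finset V) : Prop :=
  F.Nonempty ∧ ∀ v ∉ F, ¬ ∃! u, u ∈ F ∧ G.Adj v u

/-- The fort number: the maximum cardinality of a collection of pairwise disjoint forts. -/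
noncomputable def fortNumber {V : Type*} (G : SimpleGraph V) : ℕ :=
  sSup {k | ∃ 𝒞 : Finset (Finset V), (∀ F ∈ 𝒞, IsFort G F) ∧
    (↑𝒞 : Set (Finset V)).Pairwise Disjoint ∧ 𝒞.card = k}

/-- The fractional zero forcing number. -/
noncomputable def fracZ {V : Type*} [Fintype V] (G : SimpleGraph V) : ℝ :=
  sInf {x : ℝ | ∃ ω : V → ℝ, (∀ v, 0 ≤ ω v) ∧
    (∀ F : Finset V, IsFort G F → 1 ≤ ∑ v ∈ F, ω v) ∧ x = ∑ v, ω v}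

/-- The set of vertices eventually filled by the zero forcing process started at `S`. -/
inductive ZFForced {V : Type*} (G : SimpleGraph V) (S : Set V) : V → Prop
  | init (v : V) : v ∈ S → ZFForced G S v
  | force (u w : V) : G.Adj u w → ZFForced G S u →
      (∀ x, G.Adj u x → x ≠ w → ZFForced G S x) → ZFForced G S w

/-- A zero forcing set: starting from `S`, every vertex is eventually filled. -/
def IsZeroForcingSet {V : Type*} (G : SimpleGraph V) (S : Set V) : Prop :=
  ∀ v, ZFForced G S v

/-- The zero forcing number: minimum cardinality of a zero forcing set. -/
noncomputable def zfNumber {V : Type*} (G : SimpleGraph V) : ℕ :=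
  sInf {k | ∃ S : Finset V, IsZeroForcingSet G ↑S ∧ S.card = k}


/-- The corona `G ∘ 2K₁`: attach two new pendant vertices to each vertex of `G`. -/
def corona2K1 {V : Type*} (G : SimpleGraph V) : SimpleGraph (V ⊕ V × Fin 2) :=
  SimpleGraph.fromRel (fun a b => match a, b with
    | Sum.inl x, Sum.inl y => G.Adj x y
    | Sum.inl x, Sum.inr (y, _) => x = y
    | _, _ => False)

section Aux
variable {V : Type*}

lemma corona_adj_inl_inl (G : SimpleGraph V) (x y : V) :
    (corona2K1 G).Adj (Sum.inl x) (Sum.inl y) ↔ G.Adj x y := by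
  simp only [corona2K1, SimpleGraph.fromRel_adj]
  constructor
  · rintro ⟨h, h1 | h1⟩
    · exact h1
    · exact h1.symm
  · intro h
    exact ⟨by simpa using h.ne, Or.inl h⟩

lemma corona_adj_inl_inr (G : SimpleGraph V) (x : V) (p : V × Fin 2) :
    (corona2K1 G).Adj (Sum.inl x) (Sum.inr p) ↔ x = p.1 := by
  simp only [corona2K1, SimpleGraph.fromRel_adj]
  constructor
  · rintro ⟨h, h1 | h1⟩
    · exact h1
    · exact h1.elim
  · intro h
    exact ⟨Sum.inl_ne_inr, Or.inl h⟩

lemma corona_adj_inr_inl (G : SimpleGraph V) (p : V × Fin 2) (x : V) :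
    (corona2K1 G).Adj (Sum.inr p) (Sum.inl x) ↔ x = p.1 := by
  rw [SimpleGraph.adj_comm]; exact corona_adj_inl_inr G x p

lemma corona_adj_inr_inr (G : SimpleGraph V) (p q : V × Fin 2) :
    ¬ (corona2K1 G).Adj (Sum.inr p) (Sum.inr q) := by
  simp only [corona2K1, SimpleGraph.fromRel_adj]
  rintro ⟨-, h | h⟩ <;> exact h

/-- A zero forcing set meets every fort. -/
lemma fort_meets_zfs {W : Type*} (G : SimpleGraph W) (S : Set W) (hS : IsZeroForcingSet G S)
    (F : Finset W) (hF : IsFort G F) : ∃ v ∈ F, v ∈ S := by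
  by_contra h
  push_neg at h
  have key : ∀ v, ZFForced G S v → v ∉ F := by
    intro v hv
    induction hv with
    | init v hvS => exact fun hvF => h v hvF hvS
    | force u w hadj hu hnb ihu ihnb =>
      intro hwF
      refine hF.2 u ihu ⟨w, ⟨hwF, hadj⟩, ?_⟩
      rintro z ⟨hzF, hz⟩
      by_contra hne
      exact ihnb z hz hne hzF
  obtain ⟨v, hv⟩ := hF.1
  exact key v (hS v) hv

variable [Fintype V] [DecidableEq V]

/-- The standard zero forcing set: one pendant per vertex. -/
def pendSet (V : Type*) [Fintype V] [DecidableEq V] : Finset (V ⊕ V × Fin 2) :=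
  Finset.univ.image (fun x => Sum.inr (x, 0))

lemma pendSet_card : (pendSet V).card = Fintype.card V := by
  rw [pendSet, Finset.card_image_of_injective _ (fun a b h => by simpa using h)]
  simp

lemma pendSet_zfs (G : SimpleGraph V) : IsZeroForcingSet (corona2K1 G) ↑(pendSet V) := by
  set S : Set (V ⊕ V × Fin 2) := ↑(pendSet V)
  have hmem : ∀ x : V, (Sum.inr (x, 0) : V ⊕ V × Fin 2) ∈ S := by
    intro x; simp [S, pendSet]
  have h0 : ∀ x, ZFForced (corona2K1 G) S (Sum.inr (x, 0)) :=
    fun x => ZFForced.init _ (hmem x)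
  have h1 : ∀ x, ZFForced (corona2K1 G) S (Sum.inl x) := by
    intro x
    refine ZFForced.force (Sum.inr (x, 0)) (Sum.inl x)
      ((corona_adj_inr_inl G _ x).mpr rfl) (h0 x) ?_
    rintro (y | p) hadj hne
    · have hyx : y = x := (corona_adj_inr_inl G _ y).mp hadj
      exact absurd (congrArg Sum.inl hyx) hne
    · exact absurd hadj (corona_adj_inr_inr G _ _)
  have h2 : ∀ x, ZFForced (corona2K1 G) S (Sum.inr (x, 1)) := by
    intro x
    refine ZFForced.force (Sum.inl x) (Sum.inr (x, 1))
      ((corona_adj_inl_inr G x _).mpr rfl) (h1 x) ?_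
    rintro (y | ⟨y, i⟩) hadj hne
    · exact h1 y
    · have hyx : x = y := (corona_adj_inl_inr G x _).mp hadj
      subst hyx
      have : i = 0 := by
        fin_cases i
        · rfl
        · exact absurd rfl hne
      rw [this]; exact h0 x
  rintro (x | ⟨x, i⟩)
  · exact h1 x
  · fin_cases i
    · exact h0 x
    · exact h2 x

/-- The pendant-pair forts. -/
def pairFort (x : V) : Finset (V ⊕ V × Fin 2) :=
  {Sum.inr (x, 0), Sum.inr (x, 1)}

lemma pairFort_isFort (G : SimpleGraph V) (x : V) : IsFort (corona2K1 G) (pairFort x) := by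
  constructor
  · exact ⟨Sum.inr (x, 0), by simp [pairFort]⟩
  · rintro (y | p) hv ⟨u, ⟨huF, hadj⟩, huniq⟩
    · have hmem : ∀ i : Fin 2, x = y → (Sum.inr (x, i) : V ⊕ V × Fin 2) ∈ pairFort x ∧
          (corona2K1 G).Adj (Sum.inl y) (Sum.inr (x, i)) := by
        intro i hxy
        refine ⟨by fin_cases i <;> simp [pairFort], (corona_adj_inl_inr G y _).mpr hxy.symm⟩
      have hxy : x = y := by
        rcases Finset.mem_insert.mp huF with h | h
        · subst h; exact ((corona_adj_inl_inr G y _).mp hadj).symm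
        · rw [Finset.mem_singleton] at h; subst h
          exact ((corona_adj_inl_inr G y _).mp hadj).symm
      have e0 := huniq _ (hmem 0 hxy)
      have e1 := huniq _ (hmem 1 hxy)
      rw [← e1] at e0
      simp at e0
    · rcases Finset.mem_insert.mp huF with h | h
      · subst h; exact corona_adj_inr_inr G _ _ hadj
      · rw [Finset.mem_singleton] at h; subst h; exact corona_adj_inr_inr G _ _ hadj

lemma pairFort_disjoint {x y : V} (h : x ≠ y) : Disjoint (pairFort x) (pairFort y) := by
  rw [Finset.disjoint_left]
  intro a ha hb
  simp only [pairFort, Finset.mem_insert, Finset.mem_singleton] at ha hb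
  rcases ha with rfl | rfl <;> rcases hb with hb | hb <;> simp_all

lemma pairFort_injective : Function.Injective (pairFort (V := V)) := by
  intro x y h
  have hm : (Sum.inr (x, 0) : V ⊕ V × Fin 2) ∈ pairFort y := h ▸ (by simp [pairFort])
  simp only [pairFort, Finset.mem_insert, Finset.mem_singleton, Sum.inr.injEq,
    Prod.mk.injEq] at hm
  rcases hm with ⟨h1, -⟩ | ⟨h1, h2⟩
  · exact h1
  · exact absurd h2 (by decide)

/-- Bound: any disjoint fort collection has size at most any zero forcing set. -/
lemma card_le_of_disjoint_forts {W : Type*} [DecidableEq W] (G : SimpleGraph W) (S : Finset W)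
    (hS : IsZeroForcingSet G ↑S) (𝒞 : Finset (Finset W)) (h1 : ∀ F ∈ 𝒞, IsFort G F)
    (h2 : (↑𝒞 : Set (Finset W)).Pairwise Disjoint) : 𝒞.card ≤ S.card := by
  classical
  rcases 𝒞.eq_empty_or_nonempty with h | ⟨F0, hF0⟩
  · simp [h]
  have hW : Nonempty W := ⟨(h1 F0 hF0).1.choose⟩
  have hx : ∀ F ∈ 𝒞, ∃ v, v ∈ F ∧ v ∈ S := by
    intro F hF
    obtain ⟨v, hv1, hv2⟩ := fort_meets_zfs G ↑S hS F (h1 F hF)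
    exact ⟨v, hv1, hv2⟩
  choose f hf1 hf2 using hx
  set g : Finset W → W := fun F => if h : F ∈ 𝒞 then f F h else Classical.arbitrary W with hg
  apply Finset.card_le_card_of_injOn g
  · intro F hF
    simp only [hg, dif_pos (Finset.mem_coe.mp hF)]
    exact hf2 F hF
  · intro F hF F' hF' heq
    simp only [Finset.coe_mem, Finset.mem_coe] at hF hF'
    by_contra hne
    have hd := h2 hF hF' hne
    simp only [hg, dif_pos hF, dif_pos hF'] at heq
    exact Finset.disjoint_left.mp hd (hf1 F hF) (heq ▸ hf1 F' hF')

end Aux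

/-- if `G'` has order `r ≥ 2`, then `ft(G' ∘ 2K₁) = Z*(G' ∘ 2K₁) = Z(G' ∘ 2K₁) = r`. -/
theorem corona2K1_numbers {V : Type*} [Fintype V] [DecidableEq V] (G' : SimpleGraph V)
    (r : ℕ) (hr : 2 ≤ r) (hcard : Fintype.card V = r) :
    fortNumber (corona2K1 G') = r ∧
    fracZ (corona2K1 G') = (r : ℝ) ∧
    zfNumber (corona2K1 G') = r := by
  classical
  have hScard : (pendSet V).card = r := by rw [pendSet_card, hcard]
  have hSzfs := pendSet_zfs G'
  set 𝒞 : Finset (Finset (V ⊕ V × Fin 2)) := Finset.univ.image pairFort with h𝒞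
  have h𝒞card : 𝒞.card = r := by
    rw [h𝒞, Finset.card_image_of_injective _ pairFort_injective, Finset.card_univ, hcard]
  have h𝒞fort : ∀ F ∈ 𝒞, IsFort (corona2K1 G') F := by
    intro F hF
    simp only [h𝒞, Finset.mem_image] at hF
    obtain ⟨x, -, rfl⟩ := hF
    exact pairFort_isFort G' x
  have h𝒞disj : (↑𝒞 : Set (Finset (V ⊕ V × Fin 2))).Pairwise Disjoint := by
    intro F hF F' hF' hne
    simp only [h𝒞, Finset.coe_image, Set.mem_image] at hF hF'
    obtain ⟨x, -, rfl⟩ := hF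
    obtain ⟨y, -, rfl⟩ := hF'
    exact pairFort_disjoint (fun hxy => hne (by rw [hxy]))
  -- Part 1: fort number
  have hftmem : r ∈ {k | ∃ 𝒞' : Finset (Finset (V ⊕ V × Fin 2)),
      (∀ F ∈ 𝒞', IsFort (corona2K1 G') F) ∧
      (↑𝒞' : Set (Finset (V ⊕ V × Fin 2))).Pairwise Disjoint ∧ 𝒞'.card = k} :=
    ⟨𝒞, h𝒞fort, h𝒞disj, h𝒞card⟩
  have hftub : ∀ k ∈ {k | ∃ 𝒞' : Finset (Finset (V ⊕ V × Fin 2)),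
      (∀ F ∈ 𝒞', IsFort (corona2K1 G') F) ∧
      (↑𝒞' : Set (Finset (V ⊕ V × Fin 2))).Pairwise Disjoint ∧ 𝒞'.card = k}, k ≤ r := by
    rintro k ⟨𝒞', hf, hd, rfl⟩
    calc 𝒞'.card ≤ (pendSet V).card :=
          card_le_of_disjoint_forts (corona2K1 G') (pendSet V) hSzfs 𝒞' hf hd
      _ = r := hScard
  have part1 : fortNumber (corona2K1 G') = r := by
    refine le_antisymm (csSup_le ⟨r, hftmem⟩ hftub) (le_csSup ⟨r, hftub⟩ hftmem)
  -- Part 2: fractional zero forcing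
  set T : Set ℝ := {x : ℝ | ∃ ω : (V ⊕ V × Fin 2) → ℝ, (∀ v, 0 ≤ ω v) ∧
    (∀ F : Finset (V ⊕ V × Fin 2), IsFort (corona2K1 G') F → 1 ≤ ∑ v ∈ F, ω v) ∧
    x = ∑ v, ω v} with hT
  have hrmem : (r : ℝ) ∈ T := by
    refine ⟨fun v => if v ∈ pendSet V then (1 : ℝ) else 0, fun v => by positivity, ?_, ?_⟩
    · intro F hF
      obtain ⟨s, hsF, hsS⟩ := fort_meets_zfs (corona2K1 G') ↑(pendSet V) hSzfs F hF
      rw [Finset.mem_coe] at hsS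
      calc (1 : ℝ) = if s ∈ pendSet V then (1 : ℝ) else 0 := by rw [if_pos hsS]
        _ ≤ ∑ v ∈ F, if v ∈ pendSet V then (1 : ℝ) else 0 :=
            Finset.single_le_sum (f := fun v => if v ∈ pendSet V then (1 : ℝ) else 0)
              (fun i _ => by positivity) hsF
    · rw [Finset.sum_ite_mem, Finset.univ_inter, Finset.sum_const, hScard]
      simp
  have hrlb : ∀ x ∈ T, (r : ℝ) ≤ x := by
    rintro x ⟨ω, hnn, hfort, rfl⟩
    have hdisj : (↑(Finset.univ : Finset V) : Set V).PairwiseDisjoint pairFort :=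
      fun a _ b _ hab => pairFort_disjoint hab
    have h1 : ∑ v ∈ Finset.univ.biUnion pairFort, ω v
        = ∑ x ∈ Finset.univ, ∑ v ∈ pairFort x, ω v := Finset.sum_biUnion hdisj
    have h2 : (r : ℝ) ≤ ∑ x ∈ Finset.univ, ∑ v ∈ pairFort x, ω v := by
      calc (r : ℝ) = ∑ _x ∈ (Finset.univ : Finset V), (1 : ℝ) := by
            rw [Finset.sum_const, Finset.card_univ, hcard]; simp
        _ ≤ _ := Finset.sum_le_sum (fun x _ => hfort _ (pairFort_isFort G' x))
    have h3 : ∑ v ∈ Finset.univ.biUnion pairFort, ω v ≤ ∑ v, ω v :=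
      Finset.sum_le_sum_of_subset_of_nonneg (Finset.subset_univ _) (fun i _ _ => hnn i)
    linarith [h1 ▸ h2, h3]
  have part2 : fracZ (corona2K1 G') = (r : ℝ) :=
    le_antisymm (csInf_le ⟨(r : ℝ), hrlb⟩ hrmem) (le_csInf ⟨_, hrmem⟩ hrlb)
  -- Part 3: zero forcing number
  have hzmem : r ∈ {k | ∃ S : Finset (V ⊕ V × Fin 2),
      IsZeroForcingSet (corona2K1 G') ↑S ∧ S.card = k} := ⟨pendSet V, hSzfs, hScard⟩
  have hzlb : ∀ k ∈ {k | ∃ S : Finset (V ⊕ V × Fin 2),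
      IsZeroForcingSet (corona2K1 G') ↑S ∧ S.card = k}, r ≤ k := by
    rintro k ⟨S', hS', rfl⟩
    calc r = 𝒞.card := h𝒞card.symm
      _ ≤ S'.card := card_le_of_disjoint_forts (corona2K1 G') S' hS' 𝒞 h𝒞fort h𝒞disj
  have part3 : zfNumber (corona2K1 G') = r :=
    le_antisymm (Nat.sInf_le hzmem) (le_csInf ⟨r, hzmem⟩ hzlb)
  exact ⟨part1, part2, part3⟩
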